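/- Let 𝕂 be a field of characteristic p > 0 and let G = ([n], E) be a simple graph whose vertex n has degree t with neighbors 1, …, t. Let D = det(A), where A is the t×t matrix (y_{ij}) with 1 ≤ i ≤ t and d−t+1 ≤ j ≤ d, let 𝔐 = (y_{ij} : i ∈ [n], j ∈ [d]) be the irrelevant maximal ideal of S, and for q = p^e let 𝔐^{[q]} = (y_{ij}^q : i ∈ [n], j ∈ [d]). If d ≥ pmd(G) + t, then for every integer e > 0, D · ∏_{{i,j} ∈ E} f_{ij}^{p^e − 1} ∉ 𝔐^{[p^e]}. -/

import Mathlib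

open MvPolynomial

/-- The polynomial `f_{ij} = ∑_{k=1}^d y_{ik} y_{jk}` associated to an edge `{i,j}`. -/
noncomputable def edgePoly (K : Type) [Field K] {V : Type} (d : ℕ) :
    Sym2 V → MvPolynomial (V × Fin d) K :=
  Sym2.lift ⟨fun i j => ∑ k : Fin d, MvPolynomial.X (i, k) * MvPolynomial.X (j, k),
    fun i j => Finset.sum_congr rfl fun k _ => mul_comm _ _⟩

/-- The Lovász–Saks–Schrijver ideal `L_G(d)` of a simple graph `G`. -/
noncomputable def lssIdeal (K : Type) [Field K] {V : Type} (G : SimpleGraph V) (d : ℕ) :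
    Ideal (MvPolynomial (V × Fin d) K) :=
  Ideal.span (edgePoly K d '' G.edgeSet)

/-- The total weight `w(i) + w(j)` of an edge `e = {i,j}`. -/
noncomputable def edgeWeight {V : Type} (w : V → ℝ) : Sym2 V → ℝ :=
  Sym2.lift ⟨fun i j => w i + w j, fun i j => add_comm (w i) (w j)⟩

/-- `M` is a positive matching of the edge set `E`. -/
def IsPositiveMatching {V : Type} (E M : Set (Sym2 V)) : Prop :=
  M ⊆ E ∧ (M.Pairwise fun e e' => ∀ v : V, ¬(v ∈ e ∧ v ∈ e')) ∧
    ∃ w : V → ℝ, (∀ e ∈ M, 0 < edgeWeight w e) ∧ ∀ e ∈ E \ M, edgeWeight w e < 0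

/-- `F 0, …, F (p-1)` is a positive matching decomposition of the edge set `E`. -/
def IsPMDecomposition {V : Type} (E : Set (Sym2 V)) {p : ℕ} (F : Fin p → Set (Sym2 V)) : Prop :=
  (⋃ i, F i) = E ∧ (Pairwise fun i j => Disjoint (F i) (F j)) ∧
    ∀ i : Fin p, IsPositiveMatching (E \ ⋃ j : Fin p, ⋃ _ : j < i, F j) (F i)

/-- The positive matching decomposition number `pmd(G)`. -/
noncomputable def pmd {V : Type} (G : SimpleGraph V) : ℕ :=
  sInf {p | ∃ F : Fin p → Set (Sym2 V), IsPMDecomposition G.edgeSet F}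

namespace LSSAux

variable {σ : Type*} {K : Type*} [CommSemiring K]

/-- weight of a monomial exponent vector -/
noncomputable def Wt (ω : σ → ℝ) (μ : σ →₀ ℕ) : ℝ := μ.sum fun q k => (k : ℝ) * ω q

lemma Wt_add (ω : σ → ℝ) (μ ν : σ →₀ ℕ) : Wt ω (μ + ν) = Wt ω μ + Wt ω ν :=
  Finsupp.sum_add_index' (fun q => by simp) (fun q m n => by push_cast; ring)

lemma Wt_single (ω : σ → ℝ) (q : σ) : Wt ω (Finsupp.single q 1) = ω q := by
  simp [Wt, Finsupp.sum_single_index]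

lemma Wt_zero (ω : σ → ℝ) : Wt ω 0 = 0 := by simp [Wt]

lemma Wt_sum (ω : σ → ℝ) {ι : Type*} (s : Finset ι) (f : ι → σ →₀ ℕ) :
    Wt ω (∑ i ∈ s, f i) = ∑ i ∈ s, Wt ω (f i) := by
  classical
  induction s using Finset.cons_induction with
  | empty => simp [Wt_zero]
  | cons i s his ih => rw [Finset.sum_cons, Finset.sum_cons, Wt_add, ih]

/-- `a` is the strict maximum (w.r.t. weight `ω`) of the support of `g`, with coefficient 1. -/
def SMax (ω : σ → ℝ) (g : MvPolynomial σ K) (a : σ →₀ ℕ) : Prop :=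
  coeff a g = 1 ∧ ∀ μ ∈ g.support, μ ≠ a → Wt ω μ < Wt ω a

lemma SMax_one (ω : σ → ℝ) : SMax ω (1 : MvPolynomial σ K) 0 := by
  classical
  constructor
  · simp
  · intro μ hμ hne
    rw [mem_support_iff, coeff_one] at hμ
    simp only [ne_eq] at hne
    rw [if_neg (fun h => hne h.symm)] at hμ
    exact absurd rfl hμ

lemma coeff_mul_of_max {ω : σ → ℝ} {g h : MvPolynomial σ K} {a b : σ →₀ ℕ}
    (hg : ∀ μ ∈ g.support, Wt ω μ ≤ Wt ω a)
    (hh : ∀ ν ∈ h.support, ν ≠ b → Wt ω ν < Wt ω b) :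
    coeff (a + b) (g * h) = coeff a g * coeff b h := by
  classical
  rw [coeff_mul]
  refine Finset.sum_eq_single_of_mem (a, b) (Finset.HasAntidiagonal.mem_antidiagonal.2 rfl) ?_
  rintro ⟨x, y⟩ hxy hne
  have hxy' : x + y = a + b := Finset.HasAntidiagonal.mem_antidiagonal.1 hxy
  by_contra hc
  have hx : x ∈ g.support := mem_support_iff.2 fun h0 => hc (by simp [h0])
  have hy : y ∈ h.support := mem_support_iff.2 fun h0 => hc (by simp [h0])
  have hW : Wt ω x + Wt ω y = Wt ω a + Wt ω b := by
    rw [← Wt_add, ← Wt_add, hxy']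
  have hyb : y = b := by
    by_contra hyb
    have := hh y hy hyb
    have := hg x hx
    linarith
  have hxa : x = a := by
    have := hxy'
    rw [hyb] at this
    exact add_right_cancel this
  exact hne (by rw [hxa, hyb])

lemma SMax.mul {ω : σ → ℝ} {g h : MvPolynomial σ K} {a b : σ →₀ ℕ}
    (hg : SMax ω g a) (hh : SMax ω h b) : SMax ω (g * h) (a + b) := by
  classical
  constructor
  · rw [coeff_mul_of_max (fun μ hμ => ?_) hh.2, hg.1, hh.1, one_mul]
    rcases eq_or_ne μ a with rfl | hne
    · exact le_refl _
    · exact (hg.2 μ hμ hne).le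
  · intro ρ hρ hne
    obtain ⟨x, hx, y, hy, hxyρ⟩ := Finset.mem_add.1 (support_mul g h hρ)
    subst hxyρ
    rw [Wt_add, Wt_add]
    rcases eq_or_ne x a with rfl | hxa
    · have hyb : y ≠ b := fun h => hne (by rw [h])
      have := hh.2 y hy hyb
      linarith
    · have h1 := hg.2 x hx hxa
      rcases eq_or_ne y b with rfl | hyb
      · linarith
      · have := hh.2 y hy hyb
        linarith

lemma SMax.pow {ω : σ → ℝ} {g : MvPolynomial σ K} {a : σ →₀ ℕ}
    (hg : SMax ω g a) : ∀ m : ℕ, SMax ω (g ^ m) (m • a)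
  | 0 => by simpa using SMax_one ω
  | (m + 1) => by
    rw [pow_succ, succ_nsmul]
    exact (SMax.pow hg m).mul hg

lemma SMax.prod {ω : σ → ℝ} {ι : Type*} {s : Finset ι} {g : ι → MvPolynomial σ K}
    {a : ι → σ →₀ ℕ} (hg : ∀ i ∈ s, SMax ω (g i) (a i)) :
    SMax ω (∏ i ∈ s, g i) (∑ i ∈ s, a i) := by
  classical
  induction s using Finset.cons_induction with
  | empty => simpa using SMax_one ω
  | cons i s his ih =>
    rw [Finset.prod_cons, Finset.sum_cons]
    exact (hg i (Finset.mem_cons_self i s)).mul (ih fun j hj => hg j (Finset.mem_cons_of_mem hj))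

lemma prod_X_eq {ι : Type*} (s : Finset ι) (v : ι → σ) :
    (∏ i ∈ s, (X (v i) : MvPolynomial σ K)) =
      monomial (∑ i ∈ s, Finsupp.single (v i) 1) (1 : K) := by
  classical
  induction s using Finset.cons_induction with
  | empty => simp
  | cons i s his ih =>
    rw [Finset.prod_cons, Finset.sum_cons, ih, X, monomial_mul, one_mul]

lemma exists_pmd {V : Type} [Fintype V] [DecidableEq V] (G : SimpleGraph V)
    [DecidableRel G.Adj] :
    ∃ F : Fin (pmd G) → Set (Sym2 V), IsPMDecomposition G.edgeSet F := by
  classical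
  have hne : {p | ∃ F : Fin p → Set (Sym2 V), IsPMDecomposition G.edgeSet F}.Nonempty := by
    set s := G.edgeFinset with hs
    set E := (fun i : Fin s.card => (s.equivFin.symm i : Sym2 V)) with hE
    have hEinj : Function.Injective E := fun i j hij => by
      have := Subtype.ext hij (p := fun x => x ∈ s)
      exact s.equivFin.symm.injective this
    have hEmem : ∀ i, E i ∈ G.edgeSet := fun i => by
      have := (s.equivFin.symm i).2
      rwa [← SimpleGraph.mem_edgeFinset]
    refine ⟨s.card, fun i => {E i}, ?_, ?_, ?_⟩
    · ext x
      simp only [Set.mem_iUnion, Set.mem_singleton_iff]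
      constructor
      · rintro ⟨i, rfl⟩; exact hEmem i
      · intro hx
        refine ⟨s.equivFin ⟨x, by rwa [SimpleGraph.mem_edgeFinset]⟩, ?_⟩
        simp [hE]
    · intro i j hij
      simp only [Set.disjoint_singleton_left, Set.mem_singleton_iff]
      exact fun h => hij (hEinj h)
    · intro i
      refine ⟨?_, Set.pairwise_singleton _ _, ?_⟩
      · rintro x rfl
        refine ⟨hEmem i, ?_⟩
        simp only [Set.mem_iUnion, Set.mem_singleton_iff]
        rintro ⟨j, hj, hj2⟩
        exact absurd (hEinj hj2.symm) (by rintro rfl; exact lt_irrefl _ hj)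
      · obtain ⟨a, b, hEi⟩ : ∃ a b, E i = s(a, b) := Sym2.ind (fun a b => ⟨a, b, rfl⟩) (E i)
        · refine ⟨fun v => if v = a ∨ v = b then 1 else -3, ?_, ?_⟩
          · rintro e rfl
            rw [hEi, edgeWeight, Sym2.lift_mk]
            dsimp only
            rw [if_pos (Or.inl rfl), if_pos (Or.inr rfl)]
            norm_num
          · rintro e ⟨⟨he, -⟩, hne⟩
            rw [Set.mem_singleton_iff, hEi] at hne
            induction e using Sym2.ind with
            | _ x y =>
              have hxy : G.Adj x y := (SimpleGraph.mem_edgeSet G).1 he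
              have hxyne : x ≠ y := hxy.ne
              rw [edgeWeight, Sym2.lift_mk]
              dsimp only
              have hnotboth : ¬((x = a ∨ x = b) ∧ (y = a ∨ y = b)) := by
                rintro ⟨hx | hx, hy | hy⟩ <;> subst hx <;> subst hy
                · exact hxyne rfl
                · exact hne rfl
                · exact hne (Sym2.eq_swap)
                · exact hxyne rfl
              by_cases hx : x = a ∨ x = b
              · rw [if_pos hx, if_neg (fun hy => hnotboth ⟨hx, hy⟩)]; norm_num
              · rw [if_neg hx]
                split <;> norm_num
  exact Nat.sInf_mem hne

end LSSAux

open LSSAux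

/-- Let `K` have characteristic `p > 0`, let `G` be a graph on `n+1` vertices whose last
vertex has degree `t` with neighbors the first `t` vertices, and let `D` be the
determinant of the `t × t` matrix of variables `(y_{ij})`, `1 ≤ i ≤ t`,
`d - t + 1 ≤ j ≤ d`.  If `d ≥ pmd(G) + t`, then for every `e > 0`,
`D · ∏_{{i,j} ∈ E} f_{ij}^{pᵉ-1}` is not in the Frobenius power `𝔐^{[pᵉ]}` of the
irrelevant maximal ideal `𝔐` of `S`. -/
theorem lss_det_product_not_in_frobenius_power (K : Type) [Field K] (p : ℕ)
    (hp : p.Prime) [CharP K p] (n d t : ℕ) (G : SimpleGraph (Fin (n + 1)))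
    [DecidableRel G.Adj] (htn : t ≤ n) (htd : t ≤ d)
    (hdeg : ∀ i : Fin (n + 1), G.Adj (Fin.last n) i ↔ (i : ℕ) < t)
    (hpmd : pmd G + t ≤ d) :
    ∀ e : ℕ, 0 < e →
      Matrix.det (Matrix.of fun i j : Fin t =>
          (MvPolynomial.X (⟨i.1, by omega⟩, ⟨d - t + j.1, by omega⟩) :
            MvPolynomial (Fin (n + 1) × Fin d) K)) *
        ∏ ed ∈ G.edgeFinset, edgePoly K d ed ^ (p ^ e - 1) ∉
      Ideal.span (Set.range fun q : Fin (n + 1) × Fin d =>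
        (MvPolynomial.X q : MvPolynomial (Fin (n + 1) × Fin d) K) ^ p ^ e) := by
  classical
  intro e he
  have hQ2 : 2 ≤ p ^ e := le_trans hp.two_le (Nat.le_self_pow he.ne' p)
  obtain ⟨F, hFU, hFdis, hFpm⟩ := LSSAux.exists_pmd G
  have hrd : pmd G + t ≤ d := hpmd
  choose w hwpos hwneg using fun i : Fin (pmd G) => (hFpm i).2.2
  have hcolex : ∀ e' ∈ G.edgeSet, ∃ i : Fin (pmd G), e' ∈ F i :=
    fun e' he' => Set.mem_iUnion.1 (hFU.ge he')
  obtain ⟨col, hcoldef⟩ : ∃ col : Sym2 (Fin (n + 1)) → ℕ, col =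
      fun e' => if h : e' ∈ G.edgeSet then ((hcolex e' h).choose : ℕ) else 0 := ⟨_, rfl⟩
  have colspec : ∀ e' (he' : e' ∈ G.edgeSet), ∃ h : col e' < pmd G, e' ∈ F ⟨col e', h⟩ := by
    intro e' he'
    have h1 : col e' = ((hcolex e' he').choose : ℕ) := by
      rw [hcoldef]; exact dif_pos he'
    refine ⟨by rw [h1]; exact ((hcolex e' he').choose).2, ?_⟩
    have h2 : (⟨col e', by rw [h1]; exact ((hcolex e' he').choose).2⟩ : Fin (pmd G))
        = (hcolex e' he').choose := Fin.ext h1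
    rw [h2]
    exact (hcolex e' he').choose_spec
  -- the scaling constants
  obtain ⟨B, hB⟩ : ∃ B : ℝ, B = ∑ i : Fin (pmd G), ∑ v : Fin (n + 1), |w i v| := ⟨_, rfl⟩
  have habs : ∀ (i : Fin (pmd G)) (v : Fin (n + 1)), |w i v| ≤ B := by
    intro i v
    rw [hB]
    calc |w i v| ≤ ∑ v' : Fin (n + 1), |w i v'| :=
          Finset.single_le_sum (f := fun v' => |w i v'|)
            (fun v' _ => abs_nonneg _) (Finset.mem_univ v)
      _ ≤ ∑ i' : Fin (pmd G), ∑ v' : Fin (n + 1), |w i' v'| :=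
          Finset.single_le_sum (f := fun i' => ∑ v' : Fin (n + 1), |w i' v'|)
            (fun i' _ => Finset.sum_nonneg fun v' _ => abs_nonneg _) (Finset.mem_univ i)
  have hB0 : 0 ≤ B := by
    rw [hB]
    exact Finset.sum_nonneg fun i _ => Finset.sum_nonneg fun v _ => abs_nonneg _
  obtain ⟨posf, hposfdef⟩ : ∃ posf : Sym2 (Fin (n + 1)) → ℝ, posf =
      fun e' => if h : col e' < pmd G then edgeWeight (w ⟨col e', h⟩) e' else 1 := ⟨_, rfl⟩
  have hposfeq : ∀ e', ∀ h : col e' < pmd G, posf e' = edgeWeight (w ⟨col e', h⟩) e' := by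
    intro e' h
    rw [hposfdef]
    exact dif_pos h
  have hposfpos : ∀ e' ∈ G.edgeSet, 0 < posf e' := by
    intro e' he'
    obtain ⟨h, hmem⟩ := colspec e' he'
    rw [hposfeq e' h]
    exact hwpos _ _ hmem
  obtain ⟨T, hT⟩ : ∃ T : ℝ, T = 1 + ∑ e' ∈ G.edgeFinset, max 0 ((2 * B + 1) / posf e') :=
    ⟨_, rfl⟩
  have hT1 : 1 ≤ T := by
    have h1 : (0:ℝ) ≤ ∑ e' ∈ G.edgeFinset, max 0 ((2 * B + 1) / posf e') :=
      Finset.sum_nonneg fun e' _ => le_max_left _ _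
    rw [hT]; linarith
  have hT0 : 0 < T := lt_of_lt_of_le one_pos hT1
  have hTpow : ∀ m : ℕ, 0 < T ^ m := fun m => pow_pos hT0 m
  have hTe : ∀ e' ∈ G.edgeFinset, 2 * B + 1 ≤ T * posf e' := by
    intro e' he'
    have hp0 : 0 < posf e' := hposfpos e' (SimpleGraph.mem_edgeFinset.1 he')
    have h1 : (2 * B + 1) / posf e' ≤ T := by
      rw [hT]
      have h2 : (2 * B + 1) / posf e' ≤ max 0 ((2 * B + 1) / posf e') := le_max_right _ _
      have h3 : max 0 ((2 * B + 1) / posf e') ≤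
          ∑ e'' ∈ G.edgeFinset, max 0 ((2 * B + 1) / posf e'') :=
        Finset.single_le_sum (f := fun e'' => max 0 ((2 * B + 1) / posf e''))
          (fun e'' _ => le_max_left _ _) he'
      linarith
    calc 2 * B + 1 = ((2 * B + 1) / posf e') * posf e' := (div_mul_cancel₀ _ hp0.ne').symm
      _ ≤ T * posf e' := mul_le_mul_of_nonneg_right h1 hp0.le
  -- the weight on variables
  obtain ⟨ω, hω⟩ : ∃ ω : Fin (n + 1) × Fin d → ℝ, ω =
      fun q' : Fin (n + 1) × Fin d =>
        if h : (q'.2 : ℕ) < pmd G then T ^ (pmd G - (q'.2 : ℕ)) * w ⟨q'.2, h⟩ q'.1 else 0 :=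
    ⟨_, rfl⟩
  have hωeq : ∀ (v : Fin (n + 1)) (k : Fin d) (h : (k : ℕ) < pmd G),
      ω (v, k) = T ^ (pmd G - (k : ℕ)) * w ⟨k, h⟩ v := by
    intro v k h
    rw [hω]
    exact dif_pos h
  have hωzero : ∀ (v : Fin (n + 1)) (k : Fin d), pmd G ≤ (k : ℕ) → ω (v, k) = 0 := by
    intro v k h
    rw [hω]
    exact dif_neg (not_lt.2 h)
  -- key inequality: for an edge {a,b} the chosen column strictly dominates
  have key : ∀ a b : Fin (n + 1), s(a, b) ∈ G.edgeSet → ∀ hcd : col s(a, b) < d,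
      ∀ k : Fin d, (k : ℕ) ≠ col s(a, b) →
      ω (a, k) + ω (b, k) < ω (a, ⟨col s(a, b), hcd⟩) + ω (b, ⟨col s(a, b), hcd⟩) := by
    intro a b hab hcd k hk
    obtain ⟨hcr, hFm⟩ := colspec s(a, b) hab
    have hSc : posf s(a, b) = w ⟨col s(a, b), hcr⟩ a + w ⟨col s(a, b), hcr⟩ b := by
      rw [hposfeq s(a, b) hcr, edgeWeight, Sym2.lift_mk]
    have hScpos : 0 < w ⟨col s(a, b), hcr⟩ a + w ⟨col s(a, b), hcr⟩ b := by
      rw [← hSc]; exact hposfpos _ hab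
    have hRHS : ω (a, ⟨col s(a, b), hcd⟩) + ω (b, ⟨col s(a, b), hcd⟩)
        = T ^ (pmd G - col s(a, b)) * (w ⟨col s(a, b), hcr⟩ a + w ⟨col s(a, b), hcr⟩ b) := by
      rw [hωeq a ⟨col s(a, b), hcd⟩ hcr, hωeq b ⟨col s(a, b), hcd⟩ hcr]
      ring
    rcases lt_or_ge (k : ℕ) (pmd G) with hkr | hkr
    · have hLHS : ω (a, k) + ω (b, k)
          = T ^ (pmd G - (k : ℕ)) * (w ⟨k, hkr⟩ a + w ⟨k, hkr⟩ b) := by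
        rw [hωeq a k hkr, hωeq b k hkr]; ring
      rcases lt_or_gt_of_ne hk with hlt | hgt
      · -- k < col: this weight sum is negative
        have hmem : s(a, b) ∈ (G.edgeSet \ ⋃ j : Fin (pmd G), ⋃ _ : j < ⟨(k : ℕ), hkr⟩, F j)
            \ F ⟨(k : ℕ), hkr⟩ := by
          have hnotin : ∀ j : Fin (pmd G), j ≠ ⟨col s(a, b), hcr⟩ → s(a, b) ∉ F j := by
            intro j hj hmem'
            exact Set.disjoint_left.1 (hFdis hj) hmem' hFm
          refine ⟨⟨hab, ?_⟩, ?_⟩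
          · simp only [Set.mem_iUnion]
            rintro ⟨j, hjk, hjmem⟩
            refine hnotin j ?_ hjmem
            intro hEq
            rw [hEq] at hjk
            have h9 : col s(a, b) < (k : ℕ) := hjk
            omega
          · refine hnotin _ ?_
            intro hEq
            have h9 : (k : ℕ) = col s(a, b) := congrArg Fin.val hEq
            omega
        have hneg : w ⟨(k : ℕ), hkr⟩ a + w ⟨(k : ℕ), hkr⟩ b < 0 := by
          have h2 := hwneg ⟨(k : ℕ), hkr⟩ s(a, b) hmem
          rwa [edgeWeight, Sym2.lift_mk] at h2
        rw [hLHS, hRHS]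
        have h3 : T ^ (pmd G - (k : ℕ)) * (w ⟨k, hkr⟩ a + w ⟨k, hkr⟩ b) < 0 :=
          mul_neg_of_pos_of_neg (hTpow _) hneg
        have h4 : 0 < T ^ (pmd G - col s(a, b)) *
            (w ⟨col s(a, b), hcr⟩ a + w ⟨col s(a, b), hcr⟩ b) :=
          mul_pos (hTpow _) hScpos
        linarith
      · -- col < k : use the scaling
        have hedf : s(a, b) ∈ G.edgeFinset := SimpleGraph.mem_edgeFinset.2 hab
        have h2B : w ⟨(k : ℕ), hkr⟩ a + w ⟨(k : ℕ), hkr⟩ b ≤ 2 * B := by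
          have h5 := habs ⟨(k : ℕ), hkr⟩ a
          have h6 := habs ⟨(k : ℕ), hkr⟩ b
          have h7 := le_abs_self (w ⟨(k : ℕ), hkr⟩ a)
          have h8 := le_abs_self (w ⟨(k : ℕ), hkr⟩ b)
          linarith
        have hTS : 2 * B + 1 ≤ T * (w ⟨col s(a, b), hcr⟩ a + w ⟨col s(a, b), hcr⟩ b) := by
          rw [← hSc]; exact hTe _ hedf
        rw [hLHS, hRHS]
        calc T ^ (pmd G - (k : ℕ)) * (w ⟨k, hkr⟩ a + w ⟨k, hkr⟩ b)
            ≤ T ^ (pmd G - (k : ℕ)) * (2 * B) :=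
              mul_le_mul_of_nonneg_left h2B (hTpow _).le
          _ < T ^ (pmd G - (k : ℕ)) *
              (T * (w ⟨col s(a, b), hcr⟩ a + w ⟨col s(a, b), hcr⟩ b)) := by
              apply mul_lt_mul_of_pos_left _ (hTpow _)
              linarith
          _ = T ^ (pmd G - (k : ℕ) + 1) *
              (w ⟨col s(a, b), hcr⟩ a + w ⟨col s(a, b), hcr⟩ b) := by
              rw [pow_succ]; ring
          _ ≤ T ^ (pmd G - col s(a, b)) *
              (w ⟨col s(a, b), hcr⟩ a + w ⟨col s(a, b), hcr⟩ b) := by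
              apply mul_le_mul_of_nonneg_right _ hScpos.le
              exact pow_le_pow_right₀ hT1 (by omega)
    · -- k ≥ pmd G : the left side is 0
      have hLHS : ω (a, k) + ω (b, k) = 0 := by
        rw [hωzero a k hkr, hωzero b k hkr]; ring
      rw [hLHS, hRHS]
      exact mul_pos (hTpow _) hScpos
  -- columns of edges stay below d - t
  have hcoldlt : ∀ e' ∈ G.edgeSet, col e' < d - t := by
    intro e' he'
    obtain ⟨h, -⟩ := colspec e' he'
    omega
  -- the leading exponent of each edge polynomial
  obtain ⟨topExp, htopdef⟩ : ∃ topExp : Sym2 (Fin (n + 1)) → ((Fin (n + 1) × Fin d) →₀ ℕ),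
      topExp = fun e' =>
        if h : col e' < d then
          Sym2.lift ⟨fun a b => Finsupp.single ((a, (⟨col e', h⟩ : Fin d))) 1
            + Finsupp.single ((b, (⟨col e', h⟩ : Fin d))) 1, fun a b => add_comm _ _⟩ e'
        else 0 := ⟨_, rfl⟩
  have htopeq : ∀ a b : Fin (n + 1), ∀ h : col s(a, b) < d,
      topExp s(a, b) = Finsupp.single ((a, (⟨col s(a, b), h⟩ : Fin d))) 1
        + Finsupp.single ((b, (⟨col s(a, b), h⟩ : Fin d))) 1 := by
    intro a b h
    simp only [htopdef]
    rw [dif_pos h, Sym2.lift_mk]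
  -- each edge polynomial has a strict maximum
  have hSM : ∀ e' ∈ G.edgeFinset, SMax ω (edgePoly K d e') (topExp e') := by
    intro e' he'
    rw [SimpleGraph.mem_edgeFinset] at he'
    induction e' using Sym2.ind with
    | _ a b =>
      have hadj : G.Adj a b := (SimpleGraph.mem_edgeSet G).1 he'
      have hab : a ≠ b := hadj.ne
      obtain ⟨hcr, hFm⟩ := colspec s(a, b) he'
      have hcd : col s(a, b) < d := by omega
      obtain ⟨u, hu⟩ : ∃ u : Fin d → ((Fin (n + 1) × Fin d) →₀ ℕ), u = fun k =>
          Finsupp.single ((a, k) : Fin (n + 1) × Fin d) 1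
            + Finsupp.single ((b, k) : Fin (n + 1) × Fin d) 1 := ⟨_, rfl⟩
      have hfeq : edgePoly K d s(a, b) = ∑ k : Fin d, monomial (u k) (1 : K) := by
        rw [edgePoly, Sym2.lift_mk]
        dsimp only
        refine Finset.sum_congr rfl fun k _ => ?_
        simp only [hu]
        rw [X, X, monomial_mul, one_mul]
      have huinj : Function.Injective u := by
        intro k k' hkk
        have h2 : ((a, k) : Fin (n + 1) × Fin d) ∈ (u k').support := by
          rw [← hkk]
          simp only [hu]
          rw [Finsupp.mem_support_iff]
          simp [Finsupp.single_apply]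
        simp only [hu] at h2
        rcases Finset.mem_union.1 (Finsupp.support_add h2) with h3 | h3
        · have h4 : ((a, k) : Fin (n + 1) × Fin d) = (a, k') :=
            Finset.mem_singleton.1 (Finsupp.support_single_subset h3)
          exact congrArg Prod.snd h4
        · have h4 : ((a, k) : Fin (n + 1) × Fin d) = (b, k') :=
            Finset.mem_singleton.1 (Finsupp.support_single_subset h3)
          exact congrArg Prod.snd h4
      have htop : topExp s(a, b) = u ⟨col s(a, b), hcd⟩ := by
        rw [htopeq a b hcd]
        simp only [hu]
      have hco : coeff (u ⟨col s(a, b), hcd⟩) (edgePoly K d s(a, b)) = 1 := by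
        rw [hfeq, coeff_sum]
        have h5 : ∀ k : Fin d, coeff (u ⟨col s(a, b), hcd⟩) (monomial (u k) (1 : K))
            = if k = ⟨col s(a, b), hcd⟩ then 1 else 0 := by
          intro k
          rw [coeff_monomial]
          exact if_congr ⟨fun h => huinj h, fun h => by rw [h]⟩ rfl rfl
        rw [Finset.sum_congr rfl fun k _ => h5 k]
        simp
      have hWu : ∀ k' : Fin d, Wt ω (u k') = ω (a, k') + ω (b, k') := by
        intro k'
        simp only [hu]
        rw [Wt_add, Wt_single, Wt_single]
      constructor
      · rw [htop]; exact hco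
      · intro μ hμ hne
        rw [mem_support_iff, hfeq, coeff_sum] at hμ
        obtain ⟨k, -, hk⟩ := Finset.exists_ne_zero_of_sum_ne_zero hμ
        rw [coeff_monomial] at hk
        have huk : u k = μ := by
          by_contra h6
          rw [if_neg h6] at hk
          exact hk rfl
        rw [htop] at hne
        have hkc : k ≠ ⟨col s(a, b), hcd⟩ := fun h7 => hne (by rw [← huk, h7])
        have hkc' : (k : ℕ) ≠ col s(a, b) := fun h8 => hkc (Fin.ext h8)
        rw [← huk, htop, hWu, hWu]
        exact key a b he' hcd k hkc'
  -- the product over all edges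
  have hQSM : SMax ω (∏ ed ∈ G.edgeFinset, edgePoly K d ed ^ (p ^ e - 1))
      (∑ ed ∈ G.edgeFinset, (p ^ e - 1) • topExp ed) :=
    SMax.prod fun ed hed => (hSM ed hed).pow _
  -- the determinant
  obtain ⟨vσm, hvσ⟩ : ∃ vσm : Equiv.Perm (Fin t) → Fin t → Fin (n + 1) × Fin d,
      vσm = fun σp i => (((⟨(σp i).1, by omega⟩ : Fin (n + 1)),
        (⟨d - t + i.1, by omega⟩ : Fin d)) : Fin (n + 1) × Fin d) := ⟨_, rfl⟩
  obtain ⟨expP, hexpP⟩ : ∃ expP : Equiv.Perm (Fin t) → ((Fin (n + 1) × Fin d) →₀ ℕ),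
      expP = fun σp => ∑ i : Fin t, Finsupp.single (vσm σp i) 1 := ⟨_, rfl⟩
  have hDdet : (Matrix.of fun i j : Fin t =>
        (X (⟨i.1, by omega⟩, ⟨d - t + j.1, by omega⟩) :
          MvPolynomial (Fin (n + 1) × Fin d) K)).det
      = ∑ σp : Equiv.Perm (Fin t),
          C (((Equiv.Perm.sign σp : ℤ) : K)) * monomial (expP σp) 1 := by
    rw [Matrix.det_apply']
    refine Finset.sum_congr rfl fun σp _ => ?_
    have h1 : (∏ i : Fin t, (Matrix.of fun i j : Fin t =>
        (X (⟨i.1, by omega⟩, ⟨d - t + j.1, by omega⟩) :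
          MvPolynomial (Fin (n + 1) × Fin d) K)) (σp i) i) = monomial (expP σp) 1 := by
      simp only [hexpP]
      rw [← prod_X_eq Finset.univ (vσm σp)]
      refine Finset.prod_congr rfl fun i _ => ?_
      simp only [hvσ]
      rfl
    rw [h1]
    congr 1
  have happly : ∀ (σp : Equiv.Perm (Fin t)) (x : Fin (n + 1) × Fin d),
      expP σp x = ∑ i : Fin t, if vσm σp i = x then 1 else 0 := by
    intro σp x
    simp only [hexpP]
    rw [Finsupp.finset_sum_apply]
    refine Finset.sum_congr rfl fun i _ => ?_
    rw [Finsupp.single_apply]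
  have hvx : ∀ (σp : Equiv.Perm (Fin t)) (i j : Fin t),
      vσm σp i = vσm 1 j ↔ (i = j ∧ σp i = i) := by
    intro σp i j
    simp only [hvσ, Equiv.Perm.one_apply, Prod.mk.injEq, Fin.mk.injEq]
    constructor
    · rintro ⟨h1, h2⟩
      have hij : i = j := Fin.ext (by omega)
      refine ⟨hij, Fin.ext ?_⟩
      rw [h1, hij]
    · rintro ⟨rfl, h2⟩
      exact ⟨by rw [h2], rfl⟩
  have hsum_ite : ∀ (σp : Equiv.Perm (Fin t)) (j : Fin t),
      expP σp (vσm 1 j) = if σp j = j then 1 else 0 := by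
    intro σp j
    rw [happly]
    calc (∑ i : Fin t, if vσm σp i = vσm 1 j then 1 else 0)
        = ∑ i : Fin t, if i = j ∧ σp i = i then 1 else 0 :=
          Finset.sum_congr rfl fun i _ => if_congr (hvx σp i j) rfl rfl
      _ = if σp j = j then 1 else 0 := by
          rw [Finset.sum_eq_single j (fun i _ hij => if_neg fun hc => hij hc.1)
            (fun h => absurd (Finset.mem_univ j) h)]
          simp
  have hdiag1 : ∀ σp : Equiv.Perm (Fin t), expP σp = expP 1 → σp = 1 := by
    intro σp hEq
    refine Equiv.ext fun j => ?_
    have h2 : expP σp (vσm 1 j) = expP 1 (vσm 1 j) := by rw [hEq]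
    rw [hsum_ite σp j, hsum_ite 1 j, if_pos (Equiv.Perm.one_apply j)] at h2
    have h3 : σp j = j := by
      by_contra h4
      rw [if_neg h4] at h2
      exact absurd h2 (by norm_num)
    rw [h3]
    exact (Equiv.Perm.one_apply j).symm
  have hDcoeff : ∀ μ, coeff μ ((Matrix.of fun i j : Fin t =>
      (X (⟨i.1, by omega⟩, ⟨d - t + j.1, by omega⟩) :
        MvPolynomial (Fin (n + 1) × Fin d) K)).det)
      = ∑ σp : Equiv.Perm (Fin t),
          ((Equiv.Perm.sign σp : ℤ) : K) * (if expP σp = μ then 1 else 0) := by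
    intro μ
    rw [hDdet, coeff_sum]
    refine Finset.sum_congr rfl fun σp _ => ?_
    rw [coeff_C_mul, coeff_monomial]
  have hdiagco : coeff (expP 1) ((Matrix.of fun i j : Fin t =>
      (X (⟨i.1, by omega⟩, ⟨d - t + j.1, by omega⟩) :
        MvPolynomial (Fin (n + 1) × Fin d) K)).det) = 1 := by
    rw [hDcoeff]
    rw [Finset.sum_eq_single 1 (fun σp _ hne => by
        rw [if_neg (fun hc => hne (hdiag1 σp hc)), mul_zero])
      (fun h => absurd (Finset.mem_univ 1) h)]
    rw [if_pos rfl]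
    simp
  have hWexp : ∀ σp : Equiv.Perm (Fin t), Wt ω (expP σp) = 0 := by
    intro σp
    simp only [hexpP]
    rw [Wt_sum]
    refine Finset.sum_eq_zero fun i _ => ?_
    rw [Wt_single]
    simp only [hvσ]
    exact hωzero _ _ (by dsimp only; omega)
  have hsuppD : ∀ μ ∈ ((Matrix.of fun i j : Fin t =>
      (X (⟨i.1, by omega⟩, ⟨d - t + j.1, by omega⟩) :
        MvPolynomial (Fin (n + 1) × Fin d) K)).det).support, Wt ω μ = 0 := by
    intro μ hμ
    rw [mem_support_iff, hDcoeff] at hμ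
    obtain ⟨σp, -, hσp⟩ := Finset.exists_ne_zero_of_sum_ne_zero hμ
    have h1 : expP σp = μ := by
      by_contra h2
      rw [if_neg h2, mul_zero] at hσp
      exact hσp rfl
    rw [← h1]
    exact hWexp σp
  -- the distinguished monomial survives in the product
  have hfinal : coeff (expP 1 + ∑ ed ∈ G.edgeFinset, (p ^ e - 1) • topExp ed)
      (((Matrix.of fun i j : Fin t =>
        (X (⟨i.1, by omega⟩, ⟨d - t + j.1, by omega⟩) :
          MvPolynomial (Fin (n + 1) × Fin d) K)).det)
        * ∏ ed ∈ G.edgeFinset, edgePoly K d ed ^ (p ^ e - 1)) = 1 := by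
    rw [coeff_mul_of_max (fun μ hμ => le_of_eq (by rw [hsuppD μ hμ, hWexp 1])) hQSM.2,
      hdiagco, hQSM.1, mul_one]
  -- facts about the leading exponents
  have htopfacts : ∀ ed ∈ G.edgeFinset, ∀ x : Fin (n + 1) × Fin d,
      topExp ed x ≤ 1 ∧ (topExp ed x ≠ 0 → x.1 ∈ ed ∧ (x.2 : ℕ) = col ed) := by
    intro ed hed
    rw [SimpleGraph.mem_edgeFinset] at hed
    induction ed using Sym2.ind with
    | _ a b =>
      intro x
      have hab : a ≠ b := ((SimpleGraph.mem_edgeSet G).1 hed).ne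
      have hcd : col s(a, b) < d := by
        obtain ⟨h, -⟩ := colspec s(a, b) hed
        omega
      rw [htopeq a b hcd, Finsupp.add_apply, Finsupp.single_apply, Finsupp.single_apply]
      constructor
      · split_ifs with h1 h2 h2
        · exact absurd (congrArg Prod.fst (h1.trans h2.symm)) hab
        · omega
        · omega
        · omega
      · intro hne
        by_cases h1 : ((a, (⟨col s(a, b), hcd⟩ : Fin d)) : Fin (n + 1) × Fin d) = x
        · rw [← h1]
          exact ⟨Sym2.mem_mk_left a b, rfl⟩
        · by_cases h2 : ((b, (⟨col s(a, b), hcd⟩ : Fin d)) : Fin (n + 1) × Fin d) = x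
          · rw [← h2]
            exact ⟨Sym2.mem_mk_right a b, rfl⟩
          · rw [if_neg h1, if_neg h2] at hne
            exact absurd rfl hne
  have hmatch : ∀ ed ∈ G.edgeFinset, ∀ ed' ∈ G.edgeFinset, ed ≠ ed' → col ed = col ed' →
      ∀ v : Fin (n + 1), ¬(v ∈ ed ∧ v ∈ ed') := by
    intro ed hed ed' hed' hne hcols
    rw [SimpleGraph.mem_edgeFinset] at hed hed'
    obtain ⟨h1, hm1⟩ := colspec ed hed
    obtain ⟨h2, hm2⟩ := colspec ed' hed'
    have h3 : (⟨col ed, h1⟩ : Fin (pmd G)) = ⟨col ed', h2⟩ := Fin.ext hcols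
    rw [h3] at hm1
    exact (hFpm ⟨col ed', h2⟩).2.1 hm1 hm2 hne
  have hdiagx : ∀ x : Fin (n + 1) × Fin d,
      expP 1 x ≤ 1 ∧ (expP 1 x ≠ 0 → d - t ≤ (x.2 : ℕ)) := by
    intro x
    have h1 : expP 1 x = ∑ i : Fin t, if vσm 1 i = x then 1 else 0 := happly 1 x
    by_cases hx : ∃ i : Fin t, vσm 1 i = x
    · obtain ⟨i0, hi0⟩ := hx
      have h2 : expP 1 x = 1 := by
        rw [h1, Finset.sum_eq_single i0 (fun i _ hii => ?_)
          (fun h => absurd (Finset.mem_univ i0) h), if_pos hi0]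
        rw [if_neg]
        intro hc
        apply hii
        have h3 := hc.trans hi0.symm
        simp only [hvσ, Prod.mk.injEq, Fin.mk.injEq] at h3
        exact Fin.ext (by omega)
      refine ⟨by rw [h2], fun _ => ?_⟩
      rw [← hi0]
      simp only [hvσ]
      exact Nat.le_add_right (d - t) i0.1
    · push_neg at hx
      have h2 : expP 1 x = 0 := by
        rw [h1]
        exact Finset.sum_eq_zero fun i _ => if_neg (hx i)
      rw [h2]
      exact ⟨zero_le_one, fun h => absurd rfl h⟩
  -- every exponent of the distinguished monomial is < p ^ e
  have hbound : ∀ x : Fin (n + 1) × Fin d,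
      (expP 1 + ∑ ed ∈ G.edgeFinset, (p ^ e - 1) • topExp ed) x < p ^ e := by
    intro x
    rw [Finsupp.add_apply, Finsupp.finset_sum_apply]
    have hsum_eq : ∀ ed ∈ G.edgeFinset,
        ((p ^ e - 1) • topExp ed) x = (p ^ e - 1) * topExp ed x :=
      fun ed _ => by rw [Finsupp.smul_apply, smul_eq_mul]
    rw [Finset.sum_congr rfl hsum_eq]
    by_cases hA : ∃ ed ∈ G.edgeFinset, topExp ed x ≠ 0
    · obtain ⟨e0, he0, he0x⟩ := hA
      obtain ⟨hx1, hx2⟩ := (htopfacts e0 he0 x).2 he0x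
      have hcol0 : col e0 < d - t := hcoldlt e0 (SimpleGraph.mem_edgeFinset.1 he0)
      have hdx : expP 1 x = 0 := by
        by_contra h3
        have h4 := (hdiagx x).2 h3
        omega
      have hsum1 : ∑ ed ∈ G.edgeFinset, (p ^ e - 1) * topExp ed x
          = (p ^ e - 1) * topExp e0 x := by
        refine Finset.sum_eq_single_of_mem e0 he0 fun ed hed hne => ?_
        have h4 : topExp ed x = 0 := by
          by_contra h5
          obtain ⟨h6, h7⟩ := (htopfacts ed hed x).2 h5
          exact hmatch ed hed e0 he0 hne (h7.symm.trans hx2) x.1 ⟨h6, hx1⟩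
        rw [h4, mul_zero]
      rw [hdx, hsum1, zero_add]
      have h8 : topExp e0 x ≤ 1 := (htopfacts e0 he0 x).1
      calc (p ^ e - 1) * topExp e0 x ≤ (p ^ e - 1) * 1 := Nat.mul_le_mul_left _ h8
        _ < p ^ e := by omega
    · push_neg at hA
      have hsum0 : ∑ ed ∈ G.edgeFinset, (p ^ e - 1) * topExp ed x = 0 :=
        Finset.sum_eq_zero fun ed hed => by rw [hA ed hed, mul_zero]
      rw [hsum0, add_zero]
      have h9 := (hdiagx x).1
      omega
  -- conclude
  intro hmem
  have hrange : (Set.range fun q : Fin (n + 1) × Fin d =>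
        (MvPolynomial.X q : MvPolynomial (Fin (n + 1) × Fin d) K) ^ p ^ e)
      = (fun s => monomial s (1 : K)) ''
        (Set.range fun q : Fin (n + 1) × Fin d => Finsupp.single q (p ^ e)) := by
    rw [← Set.range_comp]
    refine congrArg Set.range (funext fun q => ?_)
    exact X_pow_eq_monomial
  rw [hrange] at hmem
  obtain ⟨si, hsi, hle⟩ := mem_ideal_span_monomial_image.1 hmem _
    (mem_support_iff.2 (ne_of_eq_of_ne hfinal one_ne_zero))
  obtain ⟨q0, rfl⟩ := hsi
  have h1 := Finsupp.le_def.1 hle q0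
  rw [Finsupp.single_eq_same] at h1
  exact absurd h1 (not_le.2 (hbound q0))
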